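/- Let r > 0, 0 < h ≤ 2r, and η ∈ (0, F(h)) where F(h) = (h/r)(1 − h/(4r)) is the maximum of the filtered field of a solid segment of length h. Then there exists a unique y* > 0 with ρ̃(y*) = η, and the projected set {y : ρ̃(y) ≥ η} is the interval [−y*, y*]. -/

import Mathlib

open Set intervalIntegral

noncomputable def ker (r t : ℝ) : ℝ := (1 / r) * max 0 (1 - |t| / r)

noncomputable def Kfun (r t : ℝ) : ℝ :=
  ((max 0 (t + r)) ^ 2 - 2 * (max 0 t) ^ 2 + (max 0 (t - r)) ^ 2) / (2 * r ^ 2)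

lemma x_mul_max (x : ℝ) : x * max 0 x = (max 0 x) ^ 2 := by
  rcases le_total x 0 with h | h
  · rw [max_eq_left h]; ring
  · rw [max_eq_right h]; ring

lemma max_neg_eq (x : ℝ) : max 0 (-x) = max 0 x - x := by
  rcases le_total x 0 with h | h
  · rw [max_eq_right (by linarith : (0:ℝ) ≤ -x), max_eq_left h]; ring
  · rw [max_eq_left (by linarith : -x ≤ (0:ℝ)), max_eq_right h]; ring

lemma ker_cont (r : ℝ) : Continuous (ker r) := by
  unfold ker
  exact continuous_const.mul (continuous_const.max
    (continuous_const.sub (continuous_abs.div_const r)))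

lemma piece (r t : ℝ) (hr : 0 < r) :
    max 0 (r - |t|) = max 0 (t + r) - 2 * max 0 t + max 0 (t - r) := by
  rcases le_total 0 t with h | h
  · rw [abs_of_nonneg h, max_eq_right h]
    rcases le_total t r with h2 | h2
    · rw [max_eq_right (by linarith), max_eq_right (by linarith), max_eq_left (by linarith)]
      ring
    · rw [max_eq_left (by linarith), max_eq_right (by linarith), max_eq_right (by linarith)]
      ring
  · rw [abs_of_nonpos h, max_eq_left h]
    rcases le_total t (-r) with h2 | h2
    · rw [max_eq_left (show r - -t ≤ (0:ℝ) by linarith),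
        max_eq_left (show t + r ≤ (0:ℝ) by linarith),
        max_eq_left (show t - r ≤ (0:ℝ) by linarith)]
      ring
    · rw [show r - -t = t + r by ring,
        max_eq_right (show (0:ℝ) ≤ t + r by linarith),
        max_eq_left (show t - r ≤ (0:ℝ) by linarith)]
      ring

lemma ker_eq (r t : ℝ) (hr : 0 < r) :
    ker r t = (max 0 (t + r) - 2 * max 0 t + max 0 (t - r)) / r ^ 2 := by
  rw [← piece r t hr]
  unfold ker
  have h1 : 1 - |t| / r = (r - |t|) / r := by field_simp
  rw [h1]
  rcases le_total (r - |t|) 0 with h | h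
  · rw [max_eq_left (div_nonpos_of_nonpos_of_nonneg h hr.le), max_eq_left h]
    simp
  · rw [max_eq_right (by positivity), max_eq_right h]
    rw [one_div, inv_mul_eq_div, div_div, sq]

lemma max_sq_hasDerivAt (x : ℝ) :
    HasDerivAt (fun x : ℝ => (max 0 x) ^ 2) (2 * max 0 x) x := by
  rcases lt_trichotomy x 0 with hx | hx | hx
  · have h0 : HasDerivAt (fun _ : ℝ => (0 : ℝ)) 0 x := hasDerivAt_const x 0
    have : (fun x : ℝ => (max 0 x) ^ 2) =ᶠ[nhds x] fun _ => (0 : ℝ) := by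
      filter_upwards [Iio_mem_nhds hx] with y hy
      rw [max_eq_left (le_of_lt hy)]; ring
    rw [max_eq_left hx.le, mul_zero]
    exact h0.congr_of_eventuallyEq this
  · subst hx
    rw [max_self, mul_zero]
    rw [hasDerivAt_iff_tendsto_slope]
    have hb : Filter.Tendsto (fun y : ℝ => |y|) (nhdsWithin 0 {(0:ℝ)}ᶜ) (nhds 0) := by
      have := continuous_abs.tendsto (0 : ℝ)
      simpa using this.mono_left nhdsWithin_le_nhds
    apply squeeze_zero_norm _ hb
    intro y
    simp only [slope_def_field]
    rcases eq_or_ne y 0 with rfl | hy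
    · simp
    · have hr0 : ((0 ⊔ y) ^ 2 - (0 ⊔ (0:ℝ)) ^ 2) / (y - 0) = (max 0 y) ^ 2 / y := by
        norm_num
      rw [hr0]
      have hsle : (max 0 y) ^ 2 ≤ y ^ 2 := by
        rcases le_total y 0 with h | h
        · rw [max_eq_left h]; simpa using sq_nonneg y
        · rw [max_eq_right h]
      calc ‖(max 0 y) ^ 2 / y‖ = (max 0 y) ^ 2 / |y| := by
            rw [norm_div, Real.norm_eq_abs, Real.norm_eq_abs,
              abs_of_nonneg (sq_nonneg _)]
        _ ≤ y ^ 2 / |y| := by gcongr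
        _ = |y| := by
            rw [← sq_abs, sq, mul_div_assoc, div_self (abs_ne_zero.2 hy), mul_one]
  · have hsq : HasDerivAt (fun x : ℝ => x ^ 2) (2 * x) x := by
      simpa using hasDerivAt_pow 2 x
    have : (fun x : ℝ => (max 0 x) ^ 2) =ᶠ[nhds x] fun x => x ^ 2 := by
      filter_upwards [Ioi_mem_nhds hx] with y hy
      rw [max_eq_right (le_of_lt hy)]
    rw [max_eq_right hx.le]
    exact hsq.congr_of_eventuallyEq this

lemma shifted_hasDerivAt (c x : ℝ) :
    HasDerivAt (fun t : ℝ => (max 0 (t + c)) ^ 2) (2 * max 0 (x + c)) x := by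
  have h := (max_sq_hasDerivAt (x + c)).comp x ((hasDerivAt_id x).add_const c)
  simpa [Function.comp_def] using h

lemma K_hasDerivAt (r : ℝ) (hr : 0 < r) (t : ℝ) :
    HasDerivAt (Kfun r) (ker r t) t := by
  have h1 := shifted_hasDerivAt r t
  have h2 : HasDerivAt (fun t : ℝ => (max 0 t) ^ 2) (2 * max 0 t) t := max_sq_hasDerivAt t
  have h3 := shifted_hasDerivAt (-r) t
  have h := ((h1.sub (h2.const_mul 2)).add h3).div_const (2 * r ^ 2)
  have heq : (2 * max 0 (t + r) - 2 * (2 * max 0 t) + 2 * max 0 (t + -r)) / (2 * r ^ 2)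
      = ker r t := by
    rw [ker_eq r t hr]
    rw [show t + -r = t - r by ring]; ring
  rw [heq] at h
  have hfe : Kfun r = fun t : ℝ =>
      ((max 0 (t + r)) ^ 2 - 2 * (max 0 t) ^ 2 + (max 0 (t + -r)) ^ 2) / (2 * r ^ 2) := by
    funext s; simp [Kfun, sub_eq_add_neg]
  rw [hfe]
  simpa using h

lemma K_of_ge (r t : ℝ) (hr : 0 < r) (ht : r ≤ t) : Kfun r t = 1 := by
  unfold Kfun
  rw [max_eq_right (by linarith), max_eq_right (by linarith), max_eq_right (by linarith)]
  field_simp; ring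

lemma K_neg (r t : ℝ) (hr : 0 < r) : Kfun r (-t) = 1 - Kfun r t := by
  have ha := x_mul_max (t + r)
  have hb := x_mul_max t
  have hc := x_mul_max (t - r)
  have e1 : max 0 (-t + r) = max 0 (t - r) - (t - r) := by
    rw [show -t + r = -(t - r) by ring, max_neg_eq]
  have e2 : max 0 (-t) = max 0 t - t := max_neg_eq t
  have e3 : max 0 (-t - r) = max 0 (t + r) - (t + r) := by
    rw [show -t - r = -(t + r) by ring, max_neg_eq]
  have hr2 : (2 : ℝ) * r ^ 2 ≠ 0 := by positivity
  unfold Kfun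
  rw [e1, e2, e3, eq_sub_iff_add_eq, ← add_div, div_eq_one_iff_eq hr2]
  linear_combination (-2 : ℝ) * ha + 4 * hb + (-2 : ℝ) * hc

lemma rho_closed_form (r h : ℝ) (hr : 0 < r) (y : ℝ) :
    (∫ x in (-(h / 2))..(h / 2), (1 / r) * max 0 (1 - |y - x| / r))
      = Kfun r (y + h / 2) - Kfun r (y - h / 2) := by
  have h1 : (∫ x in (-(h / 2))..(h / 2), (1 / r) * max 0 (1 - |y - x| / r))
      = ∫ x in (-(h / 2))..(h / 2), ker r (y - x) := by
    simp [ker]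
  rw [h1, intervalIntegral.integral_comp_sub_left (ker r) y]
  rw [show y - h / 2 = y - h / 2 by rfl]
  have := intervalIntegral.integral_eq_sub_of_hasDerivAt
    (f := Kfun r) (f' := ker r) (a := y - h / 2) (b := y + h / 2)
    (fun t _ => K_hasDerivAt r hr t) ((ker_cont r).intervalIntegrable _ _)
  simpa [sub_neg_eq_add] using this

/-- For a solid segment of length `h ∈ (0, 2r]` with filtered field
`ρ̃(y) = ∫_{-h/2}^{h/2} (1/r) max(0, 1 - |y - x|/r) dx` and a threshold
`η ∈ (0, F(h))` where `F(h) = (h/r)(1 - h/(4r))` is the peak value `ρ̃(0)`,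
there is a unique `y* > 0` with `ρ̃(y*) = η`, and for this `y*` the projected
superlevel set `{y : ρ̃(y) ≥ η}` is exactly the interval `[-y*, y*]`. -/
theorem projected_superlevel_is_interval (r h η : ℝ) (hr : 0 < r)
    (hh0 : 0 < h) (hh : h ≤ 2 * r)
    (hη0 : 0 < η) (hη1 : η < (h / r) * (1 - h / (4 * r)))
    (ρ : ℝ → ℝ)
    (hρ : ∀ y, ρ y = ∫ x in (-(h / 2))..(h / 2), (1 / r) * max 0 (1 - |y - x| / r)) :
    (∃! ystar : ℝ, 0 < ystar ∧ ρ ystar = η) ∧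
      ∀ ystar : ℝ, 0 < ystar → ρ ystar = η →
        {y : ℝ | η ≤ ρ y} = Set.Icc (-ystar) ystar := by
  set Φ : ℝ → ℝ := fun y => Kfun r (y + h / 2) - Kfun r (y - h / 2) with hΦ
  have hρΦ' : ρ = Φ := by
    funext y; rw [hρ y, rho_closed_form r h hr y]
  have hder : ∀ y, HasDerivAt Φ (ker r (y + h / 2) - ker r (y - h / 2)) y := by
    intro y
    have h1 := (K_hasDerivAt r hr (y + h / 2)).comp y ((hasDerivAt_id y).add_const (h / 2))
    have h2 := (K_hasDerivAt r hr (y - h / 2)).comp y ((hasDerivAt_id y).sub_const (h / 2))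
    simpa [Function.comp_def, Pi.sub_def] using h1.sub h2
  have hcont : Continuous Φ := by
    rw [continuous_iff_continuousAt]; exact fun y => (hder y).continuousAt
  have hzero : ∀ y : ℝ, r + h / 2 ≤ y → Φ y = 0 := by
    intro y hy
    have h1 : Kfun r (y + h / 2) = 1 := K_of_ge r _ hr (by linarith)
    have h2 : Kfun r (y - h / 2) = 1 := K_of_ge r _ hr (by linarith)
    simp [hΦ, h1, h2]
  have heven : ∀ y : ℝ, Φ (-y) = Φ y := by
    intro y
    have e1 : -y + h / 2 = -(y - h / 2) := by ring
    have e2 : -y - h / 2 = -(y + h / 2) := by ring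
    simp only [hΦ, e1, e2, K_neg r _ hr]
    ring
  have habs : ∀ y : ℝ, Φ |y| = Φ y := by
    intro y
    rcases abs_cases y with ⟨h1, _⟩ | ⟨h1, _⟩
    · rw [h1]
    · rw [h1, heven]
  have hpeak : Φ 0 = (h / r) * (1 - h / (4 * r)) := by
    have hKneg : Kfun r (0 - h / 2) = 1 - Kfun r (h / 2) := by
      rw [show (0 : ℝ) - h / 2 = -(h / 2) by ring, K_neg r _ hr]
    have hKval : Kfun r (h / 2) =
        ((h / 2 + r) ^ 2 - 2 * (h / 2) ^ 2) / (2 * r ^ 2) := by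
      unfold Kfun
      rw [max_eq_right (show (0:ℝ) ≤ h / 2 + r by linarith),
        max_eq_right (show (0:ℝ) ≤ h / 2 by linarith),
        max_eq_left (show h / 2 - r ≤ (0:ℝ) by linarith)]
      ring_nf
    simp only [hΦ, zero_add, hKneg, hKval]
    field_simp
    ring
  have hSA : StrictAntiOn Φ (Set.Icc 0 (r + h / 2)) := by
    apply strictAntiOn_of_deriv_neg (convex_Icc _ _) hcont.continuousOn
    intro x hx
    rw [interior_Icc] at hx
    rw [(hder x).deriv]
    have hxa : |x - h / 2| < r := by
      rcases abs_cases (x - h / 2) with ⟨e, _⟩ | ⟨e, _⟩ <;> rw [e] <;>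
        [linarith [hx.2]; linarith [hx.1]]
    have hxb : |x - h / 2| < |x + h / 2| := by
      rw [abs_of_pos (show (0:ℝ) < x + h / 2 by linarith [hx.1])]
      rcases abs_cases (x - h / 2) with ⟨e, _⟩ | ⟨e, _⟩ <;> rw [e] <;> linarith [hx.1]
    have hlt : ker r (x + h / 2) < ker r (x - h / 2) := by
      unfold ker
      have hpos : 0 < 1 - |x - h / 2| / r := by
        rw [sub_pos, div_lt_one hr]; exact hxa
      rw [max_eq_right hpos.le]
      have hdd : |x - h / 2| / r < |x + h / 2| / r := by gcongr
      have hmax : max 0 (1 - |x + h / 2| / r) < 1 - |x - h / 2| / r :=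
        max_lt hpos (by linarith)
      exact mul_lt_mul_of_pos_left hmax (by positivity)
    linarith
  have hsub := intermediate_value_Icc' (show (0:ℝ) ≤ r + h / 2 by linarith)
    hcont.continuousOn
  have hmem : η ∈ Set.Icc (Φ (r + h / 2)) (Φ 0) := by
    rw [hzero _ le_rfl, hpeak]; exact ⟨hη0.le, hη1.le⟩
  obtain ⟨y0, hy0mem, hy0eq⟩ := hsub hmem
  have hy0pos : 0 < y0 := by
    rcases eq_or_lt_of_le hy0mem.1 with h0 | h0
    · exfalso; rw [← h0, hpeak] at hy0eq; linarith
    · exact h0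
  have hbound : ∀ z : ℝ, 0 < z → Φ z = η → z < r + h / 2 := by
    intro z hz hzeq
    by_contra hc
    push_neg at hc
    rw [hzero z hc] at hzeq
    linarith
  have hy0b : y0 < r + h / 2 := hbound y0 hy0pos hy0eq
  have huniq : ∀ z : ℝ, 0 < z → Φ z = η → z = y0 := by
    intro z hz hzeq
    exact hSA.injOn ⟨hz.le, (hbound z hz hzeq).le⟩ ⟨hy0pos.le, hy0b.le⟩
      (by rw [hzeq, hy0eq])
  constructor
  · refine ⟨y0, ⟨hy0pos, by rw [hρΦ']; exact hy0eq⟩, ?_⟩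
    rintro z ⟨hz, hzeq⟩
    exact huniq z hz (by rw [← hρΦ']; exact hzeq)
  · intro ys hys hyseq
    rw [hρΦ'] at hyseq ⊢
    have hysb : ys < r + h / 2 := hbound ys hys hyseq
    ext y
    simp only [Set.mem_setOf_eq, Set.mem_Icc, ← abs_le]
    constructor
    · intro hy
      by_contra hc
      push_neg at hc
      rcases lt_or_ge |y| (r + h / 2) with hlt | hge
      · have := hSA ⟨hys.le, hysb.le⟩ ⟨abs_nonneg y, hlt.le⟩ hc
        rw [habs y, hyseq] at this
        linarith
      · rw [← habs y, hzero _ hge] at hy; linarith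
    · intro hy
      rcases eq_or_lt_of_le hy with he | hlt
      · rw [← habs y, he, hyseq]
      · have := hSA ⟨abs_nonneg y, by linarith⟩ ⟨hys.le, hysb.le⟩ hlt
        rw [habs y, hyseq] at this
        linarith
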